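/- Let G₁ = ⊔_{i=1}^r G_{1i} be a finite simple graph with connected components G_{1i} on vertex sets V_{1i}, and G₂ a graph on vertex set V₂ disjoint from V₁ = ∪ V_{1i}, with r ≥ 2 and V₂ nonempty. Let G = G₁ * G₂ and let T = V₂ ∪ (∪_{i=1}^r T_{1i}) where each T_{1i} ⊆ V_{1i} is either empty or has the cut point property for G_{1i}. Then every j ∈ T is a cut point of the induced subgraph of G on ((V₁ ∪ V₂) ∖ T) ∪ {j}; in particular T has the cut point property for G. -/

import Mathlib

open SimpleGraph

/-- The join `G₁ * G₂` of two graphs on disjoint vertex sets: all edges of `G₁`,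
all edges of `G₂`, and all pairs between the two vertex sets. -/
def join {V₁ V₂ : Type*} (G₁ : SimpleGraph V₁) (G₂ : SimpleGraph V₂) :
    SimpleGraph (V₁ ⊕ V₂) where
  Adj x y :=
    match x, y with
    | .inl a, .inl b => G₁.Adj a b
    | .inr a, .inr b => G₂.Adj a b
    | .inl _, .inr _ => True
    | .inr _, .inl _ => True
  symm := ⟨by rintro (a|a) (b|b) h <;> first | exact h.symm | trivial⟩
  loopless := ⟨by rintro (a|a) h <;> exact h.ne rfl⟩

/-- The number of connected components of the induced subgraph of `G` on `s`. -/
noncomputable def numComp {V : Type*} (G : SimpleGraph V) (s : Set V) : ℕ :=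
  Nat.card (G.induce s).ConnectedComponent

/-- `T` has the cut point property for `G`: `T` is nonempty and every `i ∈ T` is a
cut point of the induced subgraph of `G` on `(V ∖ T) ∪ {i}`, i.e. removing `i` from
that induced subgraph strictly increases the number of connected components. -/
def HasCutPointProperty {V : Type*} (G : SimpleGraph V) (T : Set V) : Prop :=
  T.Nonempty ∧ ∀ i ∈ T, numComp G (Tᶜ ∪ {i}) < numComp G Tᶜ

/-- The disjoint union of a family of graphs, on the sigma type of their vertex sets. -/
def sigmaGraph {ι : Type*} {W : ι → Type*} (H : ∀ i, SimpleGraph (W i)) :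
    SimpleGraph (Σ i, W i) where
  Adj x y := ∃ i a b, (H i).Adj a b ∧ x = ⟨i, a⟩ ∧ y = ⟨i, b⟩
  symm := ⟨by rintro x y ⟨i, a, b, h, rfl, rfl⟩; exact ⟨i, b, a, h.symm, rfl, rfl⟩⟩
  loopless := ⟨by
    rintro x ⟨i, a, b, h, rfl, he⟩
    simp only [Sigma.mk.inj_iff, heq_eq_eq, true_and] at he
    exact h.ne he⟩

section Aux

variable {ι : Type*} {W : ι → Type*}

/-- Inclusion of one summand into the disjoint union. -/
def sigmaHom (H : ∀ i, SimpleGraph (W i)) (i : ι) : H i →g sigmaGraph H where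
  toFun a := ⟨i, a⟩
  map_rel' := fun {a b} h => ⟨i, a, b, h, rfl, rfl⟩

lemma sigma_comp_eq_of_reachable {H : ∀ i, SimpleGraph (W i)} {x y : Σ i, W i}
    (h : (sigmaGraph H).Reachable x y) :
    (⟨x.1, (H x.1).connectedComponentMk x.2⟩ : Σ i, (H i).ConnectedComponent)
      = ⟨y.1, (H y.1).connectedComponentMk y.2⟩ := by
  obtain ⟨w⟩ := h
  induction w with
  | nil => rfl
  | cons h p ih =>
    obtain ⟨i, a, b, hab, rfl, rfl⟩ := h
    rw [← ih]
    exact congrArg (fun c => (⟨i, c⟩ : Σ i, (H i).ConnectedComponent))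
      (ConnectedComponent.eq.mpr hab.reachable)

/-- Connected components of a disjoint union. -/
noncomputable def sigmaCompEquiv (H : ∀ i, SimpleGraph (W i)) :
    (sigmaGraph H).ConnectedComponent ≃ Σ i, (H i).ConnectedComponent where
  toFun := Quot.lift (fun x => ⟨x.1, (H x.1).connectedComponentMk x.2⟩)
    fun _ _ h => sigma_comp_eq_of_reachable h
  invFun p := p.2.lift (fun a => (sigmaGraph H).connectedComponentMk ⟨p.1, a⟩)
    fun a b pab _ => ConnectedComponent.eq.mpr (pab.reachable.map (sigmaHom H p.1))
  left_inv := by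
    apply ConnectedComponent.ind
    intro v; rfl
  right_inv := by
    rintro ⟨i, c⟩
    refine ConnectedComponent.ind (fun v => rfl) c

/-- Induced subgraph of a disjoint union is a disjoint union of induced subgraphs. -/
def sigmaInduceIso (H : ∀ i, SimpleGraph (W i)) (s : ∀ i, Set (W i)) :
    ((sigmaGraph H).induce {x : Σ i, W i | x.2 ∈ s x.1}) ≃g
      sigmaGraph (fun i => (H i).induce (s i)) where
  toFun x := ⟨x.1.1, ⟨x.1.2, x.2⟩⟩
  invFun p := ⟨⟨p.1, p.2.1⟩, p.2.2⟩
  left_inv := fun _ => rfl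
  right_inv := fun _ => rfl
  map_rel_iff' := by
    rintro ⟨⟨i, a⟩, ha⟩ ⟨⟨j, b⟩, hb⟩
    constructor
    · rintro ⟨k, u, v, huv, h1, h2⟩
      obtain ⟨rfl, h1⟩ := Sigma.mk.inj_iff.mp h1
      obtain ⟨rfl, h2⟩ := Sigma.mk.inj_iff.mp h2
      cases eq_of_heq h1; cases eq_of_heq h2
      exact ⟨_, _, _, huv, rfl, rfl⟩
    · rintro ⟨k, u, v, huv, h1, h2⟩
      obtain ⟨rfl, h1⟩ := Sigma.mk.inj_iff.mp h1
      obtain ⟨rfl, h2⟩ := Sigma.mk.inj_iff.mp h2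
      cases eq_of_heq h1; cases eq_of_heq h2
      exact ⟨_, ⟨_, ha⟩, ⟨_, hb⟩, huv, rfl, rfl⟩

lemma nat_card_sigma {α : ι → Type*} [Fintype ι] [∀ i, Finite (α i)] :
    Nat.card (Σ i, α i) = ∑ i, Nat.card (α i) := by
  letI : ∀ i, Fintype (α i) := fun i => Fintype.ofFinite _
  simp [Nat.card_eq_fintype_card, Fintype.card_sigma]

lemma numComp_sigma [Fintype ι] [∀ i, Finite (W i)]
    (H : ∀ i, SimpleGraph (W i)) (s : ∀ i, Set (W i)) :
    numComp (sigmaGraph H) {x : Σ i, W i | x.2 ∈ s x.1} = ∑ i, numComp (H i) (s i) := by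
  unfold numComp
  rw [Nat.card_congr ((sigmaInduceIso H s).connectedComponentEquiv.trans
    (sigmaCompEquiv (fun i => (H i).induce (s i))))]
  exact nat_card_sigma

lemma numComp_inl_image {V₂ : Type*} (H : ∀ i, SimpleGraph (W i)) (G₂ : SimpleGraph V₂)
    (S : Set (Σ i, W i)) :
    numComp (join (sigmaGraph H) G₂) (Sum.inl '' S) = numComp (sigmaGraph H) S := by
  unfold numComp
  refine Nat.card_congr (Iso.connectedComponentEquiv ?_).symm
  exact ⟨(Equiv.Set.image Sum.inl S Sum.inl_injective), fun {a b} => Iff.rfl⟩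

lemma numComp_empty {V : Type*} (G : SimpleGraph V) : numComp G (∅ : Set V) = 0 := by
  haveI : IsEmpty ((G.induce (∅ : Set V)).ConnectedComponent) :=
    ⟨fun c => ConnectedComponent.ind (fun v => (Set.notMem_empty _ v.2)) c⟩
  exact Nat.card_of_isEmpty

lemma numComp_pos {V : Type*} [Finite V] (G : SimpleGraph V) {s : Set V}
    (hs : s.Nonempty) : 0 < numComp G s := by
  obtain ⟨v, hv⟩ := hs
  haveI : Nonempty ((G.induce s).ConnectedComponent) :=
    ⟨(G.induce s).connectedComponentMk ⟨v, hv⟩⟩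
  exact Nat.card_pos

lemma numComp_eq_one {V : Type*} [Finite V] {G : SimpleGraph V} {s : Set V}
    (h : (G.induce s).Connected) : numComp G s = 1 := by
  haveI := h.preconnected.subsingleton_connectedComponent
  haveI : Nonempty ↑s := h.nonempty
  haveI : Nonempty ((G.induce s).ConnectedComponent) :=
    ⟨(G.induce s).connectedComponentMk (Classical.arbitrary _)⟩
  rw [numComp, Nat.card_eq_one_iff_unique]
  exact ⟨inferInstance, inferInstance⟩

end Aux

theorem stmt12 {ι : Type*} [Fintype ι] {W : ι → Type*} [∀ i, Fintype (W i)]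
    [∀ i, Nonempty (W i)] {V₂ : Type*} [Fintype V₂] [Nonempty V₂]
    (hr : 2 ≤ Fintype.card ι)
    (H : ∀ i, SimpleGraph (W i)) (hconn : ∀ i, (H i).Connected)
    (G₂ : SimpleGraph V₂)
    (T₁ : ∀ i, Set (W i)) (hT₁ : ∀ i, T₁ i = ∅ ∨ HasCutPointProperty (H i) (T₁ i)) :
    HasCutPointProperty (join (sigmaGraph H) G₂)
      (Set.range Sum.inr ∪ Sum.inl '' {x : Σ i, W i | x.2 ∈ T₁ x.1}) := by
  classical
  set T : Set ((Σ i, W i) ⊕ V₂) :=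
    Set.range Sum.inr ∪ Sum.inl '' {x : Σ i, W i | x.2 ∈ T₁ x.1} with hT
  have hTc : Tᶜ = Sum.inl '' {x : Σ i, W i | x.2 ∉ T₁ x.1} := by
    ext x
    cases x with
    | inl z => simp [hT]
    | inr v => simp [hT]
  have hcne : ∀ i, ((T₁ i)ᶜ : Set (W i)).Nonempty := by
    intro i
    rcases hT₁ i with h | h
    · rw [h, Set.compl_empty]; exact Set.univ_nonempty
    · by_contra hne
      rw [Set.not_nonempty_iff_eq_empty] at hne
      obtain ⟨⟨a, ha⟩, h2⟩ := h
      have := h2 a ha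
      rw [hne] at this
      simp [numComp_empty] at this
  have hcount : numComp (join (sigmaGraph H) G₂) Tᶜ = ∑ i, numComp (H i) (T₁ i)ᶜ := by
    rw [hTc, numComp_inl_image]
    exact numComp_sigma H fun i => (T₁ i)ᶜ
  have h2le : 2 ≤ numComp (join (sigmaGraph H) G₂) Tᶜ := by
    rw [hcount]
    calc 2 ≤ Fintype.card ι := hr
    _ = ∑ _i : ι, 1 := by simp
    _ ≤ ∑ i, numComp (H i) (T₁ i)ᶜ :=
      Finset.sum_le_sum fun i _ => numComp_pos (H i) (hcne i)
  constructor
  · exact ⟨Sum.inr (Classical.arbitrary V₂), Or.inl ⟨_, rfl⟩⟩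
  rintro j hj
  rcases hj with ⟨v, rfl⟩ | ⟨z, hz, rfl⟩
  · -- j = Sum.inr v : the augmented graph is connected
    have hconn' : ((join (sigmaGraph H) G₂).induce (Tᶜ ∪ {Sum.inr v})).Connected := by
      rw [SimpleGraph.connected_iff]
      have hvmem : (Sum.inr v : (Σ i, W i) ⊕ V₂) ∈ Tᶜ ∪ {Sum.inr v} := Or.inr rfl
      refine ⟨fun x y => ?_, ⟨⟨_, hvmem⟩⟩⟩
      have hub : ∀ x : {y // y ∈ Tᶜ ∪ {Sum.inr v}},
          ((join (sigmaGraph H) G₂).induce (Tᶜ ∪ {Sum.inr v})).Reachable x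
            ⟨Sum.inr v, hvmem⟩ := by
        rintro ⟨x, hx⟩
        cases x with
        | inl z => exact SimpleGraph.Adj.reachable trivial
        | inr w =>
          have hwv : w = v := by
            rcases hx with hx | hx
            · rw [hTc] at hx; simp at hx
            · simpa using hx
          subst hwv
          exact SimpleGraph.Reachable.refl _
      exact (hub x).trans (hub y).symm
    have h1 : numComp (join (sigmaGraph H) G₂) (Tᶜ ∪ {Sum.inr v}) = 1 :=
      numComp_eq_one hconn'
    omega
  · -- j = Sum.inl z with z.2 ∈ T₁ z.1
    obtain ⟨i, a⟩ := z
    have hz' : a ∈ T₁ i := hz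
    have hcpp : HasCutPointProperty (H i) (T₁ i) := by
      rcases hT₁ i with h | h
      · rw [h] at hz'; exact absurd hz' (Set.notMem_empty _)
      · exact h
    set s' : ∀ k, Set (W k) := Function.update (fun k => (T₁ k)ᶜ) i ((T₁ i)ᶜ ∪ {a}) with hs'
    have hset : Tᶜ ∪ {Sum.inl ⟨i, a⟩} = Sum.inl '' {x : Σ k, W k | x.2 ∈ s' x.1} := by
      rw [hTc]
      ext x
      cases x with
      | inr v => simp
      | inl z =>
        obtain ⟨j, b⟩ := z
        simp only [Set.mem_union, Set.mem_image, Set.mem_setOf_eq, Set.mem_singleton_iff,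
          Sum.inl.injEq]
        constructor
        · rintro (⟨y, hy, hyx⟩ | hz2)
          · refine ⟨y, ?_, hyx⟩
            obtain ⟨jy, by'⟩ := y
            by_cases hji : jy = i
            · cases hji
              simp only [s', Set.mem_setOf_eq, Function.update_self, Set.mem_union,
                Set.mem_compl_iff, Set.mem_singleton_iff]
              exact Or.inl hy
            · simpa only [s', Set.mem_setOf_eq, Function.update_of_ne hji,
                Set.mem_compl_iff] using hy
          · obtain ⟨rfl, h⟩ := Sigma.mk.inj_iff.mp hz2
            cases eq_of_heq h
            refine ⟨⟨j, b⟩, ?_, rfl⟩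
            simp [s', Function.update_self]
        · rintro ⟨y, hy, hyx⟩
          obtain ⟨jy, by'⟩ := y
          by_cases hji : jy = i
          · cases hji
            simp only [s', Set.mem_setOf_eq, Function.update_self, Set.mem_union,
              Set.mem_compl_iff, Set.mem_singleton_iff] at hy
            rcases hy with h | rfl
            · exact Or.inl ⟨_, h, hyx⟩
            · exact Or.inr hyx.symm
          · simp only [s', Set.mem_setOf_eq, Function.update_of_ne hji,
              Set.mem_compl_iff] at hy
            exact Or.inl ⟨_, hy, hyx⟩
    rw [hset, numComp_inl_image, hcount,
      show numComp (sigmaGraph H) {x : Σ k, W k | x.2 ∈ s' x.1} = ∑ k, numComp (H k) (s' k)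
        from numComp_sigma H s']
    refine Finset.sum_lt_sum (fun k _ => ?_) ⟨i, Finset.mem_univ i, ?_⟩
    · by_cases hk : k = i
      · cases hk
        simp only [s', Function.update_self]
        exact le_of_lt (hcpp.2 a hz')
      · simp [s', Function.update_of_ne hk]
    · simp only [s', Function.update_self]
      exact hcpp.2 a hz'
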